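/- The excedance number and the descent number are equidistributed on S_n: for every n and k, the number of permutations π ∈ S_n with exc(π) = k equals the number of permutations π ∈ S_n with des(π) = k. -/

import Mathlib

open Finset

/-- The excedance number of a permutation of `{1,…,n}` (modeled on `Fin n`). -/
noncomputable def excPerm {n : ℕ} (π : Equiv.Perm (Fin n)) : ℕ :=
  Nat.card {i : Fin n // i < π i}

/-- The descent number `des(π) = |{i ∈ [n-1] : π(i) > π(i+1)}|`. -/
noncomputable def desPerm {n : ℕ} (π : Equiv.Perm (Fin n)) : ℕ :=
  Nat.card {i : Fin n // ∃ h : i.val + 1 < n, π ⟨i.val + 1, h⟩ < π i}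

open Equiv Fin

namespace ExcDes

/-- descent predicate -/
def desp {N : ℕ} (σ : Equiv.Perm (Fin N)) (i : Fin N) : Prop :=
  ∃ h : i.val + 1 < N, σ ⟨i.val + 1, h⟩ < σ i

instance decDesp {N : ℕ} (σ : Equiv.Perm (Fin N)) (i : Fin N) : Decidable (desp σ i) :=
  decidable_of_iff (if h : i.val + 1 < N then σ ⟨i.val + 1, h⟩ < σ i else False) (by
    constructor
    · intro hh
      by_cases h : i.val + 1 < N
      · rw [dif_pos h] at hh; exact ⟨h, hh⟩
      · rw [dif_neg h] at hh; exact hh.elim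
    · rintro ⟨h, hh⟩; rwa [dif_pos h])

def desF {N : ℕ} (σ : Equiv.Perm (Fin N)) : ℕ := (univ.filter (desp σ)).card

def excF {N : ℕ} (σ : Equiv.Perm (Fin N)) : ℕ := (univ.filter (fun i => i < σ i)).card

/-- descent indicator as a function of a natural index -/
def gg {N : ℕ} (π : Equiv.Perm (Fin N)) (t : ℕ) : ℕ :=
  if h : t + 1 < N then (if π ⟨t + 1, h⟩ < π ⟨t, by omega⟩ then 1 else 0) else 0

lemma gg_le_one {N : ℕ} (π : Equiv.Perm (Fin N)) (t : ℕ) : gg π t ≤ 1 := by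
  unfold gg; split <;> [split <;> omega; omega]

lemma gg_of_ge {N : ℕ} (π : Equiv.Perm (Fin N)) {t : ℕ} (h : N ≤ t + 1) : gg π t = 0 := by
  unfold gg; rw [dif_neg (by omega)]

lemma desF_eq_sum_range {N : ℕ} (π : Equiv.Perm (Fin N)) :
    desF π = ∑ t ∈ Finset.range N, gg π t := by
  rw [desF, card_filter, ← Fin.sum_univ_eq_sum_range (gg π)]
  refine Finset.sum_congr rfl fun i _ => ?_
  by_cases h : i.val + 1 < N
  · rw [gg, dif_pos h]
    by_cases hd : π ⟨i.val + 1, h⟩ < π ⟨i.val, by omega⟩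
    · rw [if_pos, if_pos hd]
      exact ⟨h, by convert hd using 3 <;> simp⟩
    · rw [if_neg, if_neg hd]
      rintro ⟨h', hh⟩
      exact hd (by convert hh using 3 <;> simp)
  · rw [gg, dif_neg h, if_neg]
    rintro ⟨h', _⟩; exact h h'


variable {n : ℕ}

/-- extend a permutation of `Fin n` to `Fin (n+1)` fixing the last point -/
def extP (π : Equiv.Perm (Fin n)) : Equiv.Perm (Fin (n + 1)) :=
  finSuccEquivLast.permCongr.symm π.optionCongr

@[simp] lemma extP_castSucc (π : Equiv.Perm (Fin n)) (i : Fin n) :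
    extP π (Fin.castSucc i) = Fin.castSucc (π i) := by
  simp [extP, Equiv.permCongr_apply]

@[simp] lemma extP_last (π : Equiv.Perm (Fin n)) : extP π (Fin.last n) = Fin.last n := by
  simp [extP, Equiv.permCongr_apply]

def unext (σ : Equiv.Perm (Fin (n + 1))) : Equiv.Perm (Fin n) :=
  Equiv.removeNone (finSuccEquivLast.permCongr σ)

lemma unext_extP (π : Equiv.Perm (Fin n)) : unext (extP π) = π := by
  have h2 : finSuccEquivLast.permCongr (extP π) = π.optionCongr :=
    finSuccEquivLast.permCongr.apply_symm_apply π.optionCongr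
  rw [unext, h2, Equiv.removeNone_optionCongr]

lemma extP_unext {σ : Equiv.Perm (Fin (n + 1))} (h : σ (Fin.last n) = Fin.last n) :
    extP (unext σ) = σ := by
  set ρ := finSuccEquivLast.permCongr σ with hρ
  have hnone : ρ none = none := by
    simp [hρ, Equiv.permCongr_apply, ← finSuccEquivLast_last, h]
  have hoc : (Equiv.removeNone ρ).optionCongr = ρ := by
    rw [map_equiv_removeNone, hnone]
    simp
    rfl
  rw [extP, unext, ← hρ, hoc]
  exact finSuccEquivLast.permCongr.symm_apply_apply σ

/-- the cycle sending `j ↦ last`, and `x ↦ x - 1` for `x > j` -/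
def cyc (j : Fin (n + 1)) : Equiv.Perm (Fin (n + 1)) where
  toFun x := ⟨if x.val = j.val then n else if x.val < j.val then x.val else x.val - 1, by
    have := x.isLt; have := j.isLt; split_ifs <;> omega⟩
  invFun y := ⟨if y.val = n then j.val else if y.val < j.val then y.val else y.val + 1, by
    have := y.isLt; have := j.isLt; split_ifs <;> omega⟩
  left_inv x := by
    have hx := x.isLt; have hj := j.isLt
    ext; simp only; split_ifs <;> omega
  right_inv y := by
    have hy := y.isLt; have hj := j.isLt
    ext; simp only; split_ifs <;> omega

lemma cyc_val (j : Fin (n + 1)) (x : Fin (n + 1)) :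
    (cyc j x).val = if x.val = j.val then n else if x.val < j.val then x.val else x.val - 1 :=
  rfl

lemma cyc_symm_last (j : Fin (n + 1)) : (cyc j).symm (Fin.last n) = j := by
  ext; simp [cyc, Fin.last]

def insD (π : Equiv.Perm (Fin n)) (j : Fin (n + 1)) : Equiv.Perm (Fin (n + 1)) :=
  (cyc j).trans (extP π)

def insE (π : Equiv.Perm (Fin n)) (j : Fin (n + 1)) : Equiv.Perm (Fin (n + 1)) :=
  (extP π).trans (Equiv.swap (Fin.last n) j)

/-- insertion of a new largest value at position `j` -/
lemma insD_apply_self (π : Equiv.Perm (Fin n)) (j : Fin (n + 1)) :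
    insD π j j = Fin.last n := by
  have h1 : cyc j j = Fin.last n := by ext; simp [cyc_val, Fin.last]
  simp [insD, h1]

lemma insD_apply_lt (π : Equiv.Perm (Fin n)) (j : Fin (n + 1)) {x : Fin (n + 1)}
    (h : x.val < j.val) :
    insD π j x = Fin.castSucc (π ⟨x.val, by omega⟩) := by
  have h1 : cyc j x = Fin.castSucc ⟨x.val, by have := j.isLt; omega⟩ := by
    ext
    rw [cyc_val, if_neg (by omega), if_pos h]
    simp
  show extP π (cyc j x) = _
  rw [h1, extP_castSucc]

lemma insD_apply_gt (π : Equiv.Perm (Fin n)) (j : Fin (n + 1)) {x : Fin (n + 1)}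
    (h : j.val < x.val) :
    insD π j x = Fin.castSucc (π ⟨x.val - 1, by have := x.isLt; omega⟩) := by
  have h1 : cyc j x = Fin.castSucc ⟨x.val - 1, by have := x.isLt; omega⟩ := by
    ext
    rw [cyc_val, if_neg (by omega), if_neg (by omega)]
    simp
  show extP π (cyc j x) = _
  rw [h1, extP_castSucc]

/-- `insD` as an equivalence -/
def insDEquiv : Equiv.Perm (Fin n) × Fin (n + 1) ≃ Equiv.Perm (Fin (n + 1)) where
  toFun p := insD p.1 p.2
  invFun σ := (unext ((cyc (σ.symm (Fin.last n))).symm.trans σ), σ.symm (Fin.last n))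
  left_inv := by
    rintro ⟨π, j⟩
    have hsymm : (insD π j).symm (Fin.last n) = j := by
      rw [Equiv.symm_apply_eq, insD_apply_self]
    have h2 : (cyc j).symm.trans (insD π j) = extP π := by
      ext x; simp [insD]
    simp only [hsymm, h2, unext_extP]
  right_inv := by
    intro σ
    set j := σ.symm (Fin.last n) with hj
    have hτ : ((cyc j).symm.trans σ) (Fin.last n) = Fin.last n := by
      simp [cyc_symm_last, hj]
    simp only [insD]
    rw [extP_unext hτ]
    ext x; simp [← hj]

/-- `insE` as an equivalence -/
def insEEquiv : Equiv.Perm (Fin n) × Fin (n + 1) ≃ Equiv.Perm (Fin (n + 1)) where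
  toFun p := insE p.1 p.2
  invFun σ := (unext (σ.trans (Equiv.swap (Fin.last n) (σ (Fin.last n)))), σ (Fin.last n))
  left_inv := by
    rintro ⟨π, j⟩
    have h1 : insE π j (Fin.last n) = j := by simp [insE]
    have h2 : (insE π j).trans (Equiv.swap (Fin.last n) j) = extP π := by
      ext x; simp [insE]
    simp only [h1, h2, unext_extP]
  right_inv := by
    intro σ
    have hτ : (σ.trans (Equiv.swap (Fin.last n) (σ (Fin.last n)))) (Fin.last n) = Fin.last n := by
      simp
    simp only [insE]
    rw [extP_unext hτ]
    ext x; simp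

/-! ### Excedance computations -/

lemma insE_apply_castSucc (π : Equiv.Perm (Fin n)) (j : Fin (n + 1)) (b : Fin n) :
    insE π j (Fin.castSucc b) = Equiv.swap (Fin.last n) j (Fin.castSucc (π b)) := by
  simp [insE]

lemma excF_extP (π : Equiv.Perm (Fin n)) : excF (extP π) = excF π := by
  rw [excF, excF, card_filter, card_filter, Fin.sum_univ_castSucc]
  rw [if_neg (by simp), add_zero]
  refine Finset.sum_congr rfl fun b _ => ?_
  simp [Fin.castSucc_lt_castSucc_iff]

lemma excF_insE_castSucc (π : Equiv.Perm (Fin n)) (a : Fin n) :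
    excF (insE π (Fin.castSucc a)) = excF π + (if π.symm a < a then 0 else 1) := by
  have key : ∀ b : Fin n,
      (if Fin.castSucc b < insE π (Fin.castSucc a) (Fin.castSucc b) then 1 else 0) =
      ((if b < π b then 1 else 0) +
        (if b = π.symm a then (if ¬ π.symm a < a then 1 else 0) else 0)) := by
    intro b
    rw [insE_apply_castSucc]
    by_cases hba : π b = a
    · have hb : b = π.symm a := by rw [← hba, Equiv.symm_apply_apply]
      rw [hba, Equiv.swap_apply_right, if_pos (Fin.castSucc_lt_last b), if_pos hb]
      subst hb
      by_cases hlt : π.symm a < a <;> simp [hlt]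
    · have h1 : Fin.castSucc (π b) ≠ Fin.last n := (Fin.castSucc_lt_last (π b)).ne
      have h2 : Fin.castSucc (π b) ≠ Fin.castSucc a := by
        simpa [Fin.castSucc_inj] using hba
      have hb : ¬ b = π.symm a := fun h => hba (by rw [h, Equiv.apply_symm_apply])
      simp only [Equiv.swap_apply_of_ne_of_ne h1 h2, Fin.castSucc_lt_castSucc_iff]
      rw [if_neg hb, add_zero]
  rw [excF, card_filter, Fin.sum_univ_castSucc]
  have hlast : insE π (Fin.castSucc a) (Fin.last n) = Fin.castSucc a := by
    simp [insE]
  rw [hlast, if_neg (by exact fun h => absurd (Fin.castSucc_lt_last a) (lt_asymm h)), add_zero]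
  rw [Finset.sum_congr rfl fun b _ => key b, Finset.sum_add_distrib, Finset.sum_ite_eq']
  rw [excF, card_filter]
  by_cases h : π.symm a < a <;> simp [h]

def deltaE (π : Equiv.Perm (Fin n)) (j : Fin (n + 1)) : ℕ :=
  if h : j = Fin.last n then 0 else if π.symm (j.castPred h) < j.castPred h then 0 else 1

lemma excF_insE (π : Equiv.Perm (Fin n)) (j : Fin (n + 1)) :
    excF (insE π j) = excF π + deltaE π j := by
  by_cases h : j = Fin.last n
  · subst h
    have : insE π (Fin.last n) = extP π := by
      ext x; simp [insE, Equiv.swap_self]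
    rw [this, excF_extP, deltaE, dif_pos rfl, add_zero]
  · have hj : j = Fin.castSucc (j.castPred h) := (Fin.castSucc_castPred j h).symm
    rw [deltaE, dif_neg h]
    conv_lhs => rw [hj]
    exact excF_insE_castSucc π (j.castPred h)

lemma card_symm_lt (π : Equiv.Perm (Fin n)) :
    (univ.filter (fun a : Fin n => π.symm a < a)).card = excF π := by
  rw [excF]
  refine Finset.card_bij' (fun a _ => π.symm a) (fun b _ => π b) ?_ ?_ ?_ ?_
  · intro a ha
    rw [mem_filter] at ha ⊢
    exact ⟨mem_univ _, by simpa using ha.2⟩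
  · intro b hb
    rw [mem_filter] at hb ⊢
    exact ⟨mem_univ _, by simpa using hb.2⟩
  · intro a _; simp
  · intro b _; simp

lemma fiber_insE (π : Equiv.Perm (Fin n)) (k : ℕ) :
    (univ.filter (fun j : Fin (n + 1) => excF (insE π j) = k)).card =
      (if excF π = k then excF π + 1 else 0) +
        (if excF π + 1 = k then n - excF π else 0) := by
  rw [card_filter]
  simp only [excF_insE]
  rw [Fin.sum_univ_castSucc]
  have hdl : deltaE π (Fin.last n) = 0 := by rw [deltaE, dif_pos rfl]
  have hdc : ∀ a : Fin n, deltaE π (Fin.castSucc a) =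
      if π.symm a < a then 0 else 1 := by
    intro a
    rw [deltaE, dif_neg (Fin.castSucc_lt_last a).ne]
    simp
    exact if_congr Iff.rfl rfl rfl
  have key : ∀ a : Fin n,
      (if excF π + deltaE π (Fin.castSucc a) = k then 1 else 0) =
      (if π.symm a < a then (if excF π = k then 1 else 0)
        else (if excF π + 1 = k then 1 else 0)) := by
    intro a
    rw [hdc a]
    by_cases h : π.symm a < a
    · rw [if_pos h, if_pos h, add_zero]
    · rw [if_neg h, if_neg h]
  rw [Finset.sum_congr rfl fun a _ => key a, Finset.sum_ite, Finset.sum_const, Finset.sum_const,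
    smul_eq_mul, smul_eq_mul, hdl, add_zero]
  have hA : (univ.filter (fun a : Fin n => π.symm a < a)).card = excF π := card_symm_lt π
  have hA' : (univ.filter (fun a : Fin n => ¬ π.symm a < a)).card = n - excF π := by
    have h1 := Finset.card_filter_add_card_filter_not
      (s := (univ : Finset (Fin n))) (p := fun a : Fin n => π.symm a < a)
    rw [hA, Finset.card_univ, Fintype.card_fin] at h1
    omega
  rw [hA, hA']
  have hm : excF π ≤ n := by
    rw [← hA]
    exact le_trans (Finset.card_filter_le _ _) (by simp)
  split_ifs <;> omega


/-! ### Descent computations -/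

lemma gg_insD_lt (π : Equiv.Perm (Fin n)) (j : Fin (n + 1)) {t : ℕ} (h : t + 1 < j.val) :
    gg (insD π j) t = gg π t := by
  have hj := j.isLt
  have h1 : t + 1 < n + 1 := by omega
  have h2 : t + 1 < n := by omega
  rw [gg, dif_pos h1, gg, dif_pos h2]
  rw [insD_apply_lt π j (x := ⟨t + 1, h1⟩) (by simpa using h),
    insD_apply_lt π j (x := ⟨t, by omega⟩) (by simp; omega)]
  simp [Fin.castSucc_lt_castSucc_iff]

lemma gg_insD_eq_pred (π : Equiv.Perm (Fin n)) (j : Fin (n + 1)) {t : ℕ} (h : t + 1 = j.val) :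
    gg (insD π j) t = 0 := by
  have hj := j.isLt
  have h1 : t + 1 < n + 1 := by omega
  rw [gg, dif_pos h1]
  have hjj : (⟨t + 1, h1⟩ : Fin (n + 1)) = j := by ext; simpa using h
  rw [hjj, insD_apply_self, insD_apply_lt π j (x := ⟨t, by omega⟩) (by simp; omega)]
  rw [if_neg (by exact fun hc => absurd (Fin.castSucc_lt_last _) (lt_asymm hc))]

lemma gg_insD_self (π : Equiv.Perm (Fin n)) (j : Fin (n + 1)) {t : ℕ} (h : t = j.val) :
    gg (insD π j) t = if t < n then 1 else 0 := by
  have hj := j.isLt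
  by_cases hn : t < n
  · have h1 : t + 1 < n + 1 := by omega
    rw [gg, dif_pos h1, if_pos hn]
    have hjj : (⟨t, by omega⟩ : Fin (n + 1)) = j := by ext; simpa using h
    rw [hjj, insD_apply_self, insD_apply_gt π j (x := ⟨t + 1, h1⟩) (by simp; omega)]
    rw [if_pos (Fin.castSucc_lt_last _)]
  · rw [if_neg hn, gg_of_ge _ (by omega)]

lemma gg_insD_gt (π : Equiv.Perm (Fin n)) (j : Fin (n + 1)) {t : ℕ} (h : j.val < t) :
    gg (insD π j) t = gg π (t - 1) := by
  by_cases hn : t < n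
  · have h1 : t + 1 < n + 1 := by omega
    have h2 : (t - 1) + 1 < n := by omega
    rw [gg, dif_pos h1, gg, dif_pos h2]
    rw [insD_apply_gt π j (x := ⟨t + 1, h1⟩) (by simp; omega),
      insD_apply_gt π j (x := ⟨t, by omega⟩) (by simp; omega)]
    have e1 : (⟨t + 1 - 1, by omega⟩ : Fin n) = ⟨(t - 1) + 1, h2⟩ := by ext; simp; omega
    have e2 : (⟨t - 1, by omega⟩ : Fin n) = ⟨t - 1, by omega⟩ := rfl
    rw [e1]
    simp [Fin.castSucc_lt_castSucc_iff]
  · rw [gg_of_ge _ (by omega), gg_of_ge _ (by omega)]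

lemma sum_range_split (f : ℕ → ℕ) (a b : ℕ) :
    ∑ t ∈ Finset.range (a + b), f t
      = ∑ t ∈ Finset.range a, f t + ∑ i ∈ Finset.range b, f (a + i) := by
  induction b with
  | zero => simp
  | succ b ih =>
      rw [show a + (b + 1) = (a + b) + 1 from rfl, Finset.sum_range_succ, ih,
        Finset.sum_range_succ, add_assoc]

def deltaD (π : Equiv.Perm (Fin n)) (j : Fin (n + 1)) : ℕ :=
  if j.val = n ∨ (0 < j.val ∧ gg π (j.val - 1) = 1) then 0 else 1

lemma desF_insD (π : Equiv.Perm (Fin n)) (j : Fin (n + 1)) :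
    desF (insD π j) = desF π + deltaD π j := by
  have hj : j.val ≤ n := by omega
  rw [desF_eq_sum_range, desF_eq_sum_range]
  by_cases hm0 : j.val = 0
  · rw [Finset.sum_range_succ' (gg (insD π j))]
    rw [gg_insD_self π j hm0.symm]
    have hc : ∀ i ∈ Finset.range n, gg (insD π j) (i + 1) = gg π i := by
      intro i _
      rw [gg_insD_gt π j (by omega)]
      norm_num
    rw [Finset.sum_congr rfl hc]
    have hδ : deltaD π j = if 0 < n then 1 else 0 := by
      rw [deltaD]
      by_cases hn : n = 0
      · rw [if_pos (Or.inl (by omega)), if_neg (by omega)]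
      · rw [if_neg (by push_neg; exact ⟨by omega, fun h => absurd h (by omega)⟩),
          if_pos (by omega)]
    rw [hδ]
  · obtain ⟨M, hjv⟩ : ∃ M, j.val = M + 1 := ⟨j.val - 1, by omega⟩
    have hMn : M + 1 ≤ n := by omega
    set f := gg (insD π j) with hf
    have e1 := sum_range_split f (M + 2) (n - M - 1)
    rw [show M + 2 + (n - M - 1) = n + 1 by omega] at e1
    have e2 : ∑ t ∈ Finset.range (M + 2), f t
        = (∑ t ∈ Finset.range M, f t + f M) + f (M + 1) := by
      rw [Finset.sum_range_succ, Finset.sum_range_succ]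
    have e4 : ∑ t ∈ Finset.range M, f t = ∑ t ∈ Finset.range M, gg π t := by
      refine Finset.sum_congr rfl fun t ht => ?_
      rw [Finset.mem_range] at ht
      rw [hf]
      exact gg_insD_lt π j (by omega)
    have e5 : f M = 0 := by
      rw [hf]
      exact gg_insD_eq_pred π j (by omega)
    have e6 : f (M + 1) = if M + 1 < n then 1 else 0 := by
      rw [hf]
      exact gg_insD_self π j (by omega)
    have e7 : ∑ i ∈ Finset.range (n - M - 1), f (M + 2 + i)
        = ∑ i ∈ Finset.range (n - M - 1), gg π (M + 1 + i) := by
      refine Finset.sum_congr rfl fun i _ => ?_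
      rw [hf, gg_insD_gt π j (by omega)]
      congr 1
      omega
    have r1 := sum_range_split (gg π) (M + 1) (n - M - 1)
    rw [show M + 1 + (n - M - 1) = n by omega] at r1
    have r2 : ∑ t ∈ Finset.range (M + 1), gg π t
        = ∑ t ∈ Finset.range M, gg π t + gg π M := Finset.sum_range_succ _ _
    have hgle := gg_le_one π M
    have hδval : deltaD π j = if M + 1 = n ∨ gg π M = 1 then 0 else 1 := by
      rw [deltaD, hjv]
      have harg : M + 1 - 1 = M := by omega
      rw [harg]
      by_cases h1 : M + 1 = n
      · rw [if_pos (Or.inl h1), if_pos (Or.inl h1)]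
      · by_cases h2 : gg π M = 1
        · rw [if_pos (Or.inr ⟨by omega, h2⟩), if_pos (Or.inr h2)]
        · rw [if_neg (by push_neg; exact ⟨h1, fun _ => h2⟩),
            if_neg (by push_neg; exact ⟨h1, h2⟩)]
    by_cases hmn : M + 1 = n
    · have hg0 : gg π M = 0 := gg_of_ge π (by omega)
      rw [if_neg (by omega)] at e6
      rw [if_pos (Or.inl hmn)] at hδval
      omega
    · rw [if_pos (by omega)] at e6
      by_cases hg1 : gg π M = 1
      · rw [if_pos (Or.inr hg1)] at hδval
        omega
      · rw [if_neg (by push_neg; exact ⟨hmn, hg1⟩)] at hδval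
        omega

lemma card_deltaD_zero (π : Equiv.Perm (Fin n)) :
    (univ.filter (fun j : Fin (n + 1) => deltaD π j = 0)).card = desF π + 1 := by
  set q : ℕ → ℕ := fun t => if t = n ∨ (0 < t ∧ gg π (t - 1) = 1) then 1 else 0 with hq
  have hpt : ∀ j : Fin (n + 1), (if deltaD π j = 0 then (1 : ℕ) else 0) = q j.val := by
    intro j
    simp only [hq, deltaD]
    by_cases hc : j.val = n ∨ (0 < j.val ∧ gg π (j.val - 1) = 1) <;> simp only [hc] <;> simp
  rw [card_filter, Finset.sum_congr rfl fun j _ => hpt j, Fin.sum_univ_eq_sum_range q]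
  rw [Finset.sum_range_succ]
  have hqn : q n = 1 := by simp [hq]
  rw [hqn, desF_eq_sum_range]
  congr 1
  cases n with
  | zero => simp
  | succ n' =>
      rw [Finset.sum_range_succ' q n']
      have hq0 : q 0 = 0 := by simp [hq]
      rw [hq0, add_zero]
      have hc2 : ∀ i ∈ Finset.range n', q (i + 1) = gg π i := by
        intro i hi
        rw [Finset.mem_range] at hi
        have := gg_le_one π i
        simp only [hq]
        by_cases hg : gg π i = 1
        · rw [if_pos (Or.inr ⟨by omega, by simpa using hg⟩), hg]
        · rw [if_neg ?side]
          · omega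
          · push_neg
            exact ⟨by omega, fun _ => by simpa using hg⟩
      rw [Finset.sum_congr rfl hc2]
      conv_rhs => rw [Finset.sum_range_succ, gg_of_ge π (le_refl _), add_zero]

lemma fiber_insD (π : Equiv.Perm (Fin n)) (k : ℕ) :
    (univ.filter (fun j : Fin (n + 1) => desF (insD π j) = k)).card =
      (if desF π = k then desF π + 1 else 0) +
        (if desF π + 1 = k then n - desF π else 0) := by
  rw [card_filter]
  simp only [desF_insD]
  have key : ∀ j : Fin (n + 1), (if desF π + deltaD π j = k then (1 : ℕ) else 0) =
      (if deltaD π j = 0 then (if desF π = k then (1 : ℕ) else 0)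
        else (if desF π + 1 = k then (1 : ℕ) else 0)) := by
    intro j
    have hδ : deltaD π j = 0 ∨ deltaD π j = 1 := by
      rw [deltaD]; split_ifs <;> omega
    rcases hδ with h | h <;> rw [h] <;> simp
  rw [Finset.sum_congr rfl fun j _ => key j, Finset.sum_ite, Finset.sum_const,
    Finset.sum_const, smul_eq_mul, smul_eq_mul]
  have hZ := card_deltaD_zero π
  have hZ' : (univ.filter (fun j : Fin (n + 1) => ¬ deltaD π j = 0)).card
      = n - desF π := by
    have h1 := Finset.card_filter_add_card_filter_not
      (s := (univ : Finset (Fin (n + 1)))) (p := fun j : Fin (n + 1) => deltaD π j = 0)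
    rw [hZ, Finset.card_univ, Fintype.card_fin] at h1
    have hdn : desF π + 1 ≤ n + 1 := by rw [← hZ]; exact le_trans (Finset.card_filter_le _ _) (by simp)
    omega
  rw [hZ, hZ']
  have hdn : desF π ≤ n := by
    have : desF π + 1 ≤ n + 1 := by rw [← hZ]; exact le_trans (Finset.card_filter_le _ _) (by simp)
    omega
  split_ifs <;> omega

@[simp] lemma insEEquiv_apply (p : Equiv.Perm (Fin n) × Fin (n + 1)) :
    insEEquiv p = insE p.1 p.2 := rfl

@[simp] lemma insDEquiv_apply (p : Equiv.Perm (Fin n) × Fin (n + 1)) :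
    insDEquiv p = insD p.1 p.2 := rfl

/-! ### Counting -/

lemma step_count (F : Equiv.Perm (Fin n) × Fin (n + 1) ≃ Equiv.Perm (Fin (n + 1)))
    (S : Equiv.Perm (Fin (n + 1)) → ℕ) (s : Equiv.Perm (Fin n) → ℕ)
    (hfib : ∀ π k, (univ.filter (fun j => S (F (π, j)) = k)).card =
      (if s π = k then s π + 1 else 0) + (if s π + 1 = k then n - s π else 0)) (k : ℕ) :
    (univ.filter (fun σ => S σ = k)).card =
      ∑ π : Equiv.Perm (Fin n),
        ((if s π = k then s π + 1 else 0) + (if s π + 1 = k then n - s π else 0)) := by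
  rw [card_filter, ← Equiv.sum_comp F (fun σ => if S σ = k then (1 : ℕ) else 0),
    Fintype.sum_prod_type]
  refine Finset.sum_congr rfl fun π _ => ?_
  rw [← hfib π k, card_filter]

lemma sum_fiber_eq (s : Equiv.Perm (Fin n) → ℕ) (k : ℕ) :
    ∑ π : Equiv.Perm (Fin n),
        ((if s π = k then s π + 1 else 0) + (if s π + 1 = k then n - s π else 0))
      = (k + 1) * (univ.filter (fun π => s π = k)).card
        + (n + 1 - k) * (univ.filter (fun π => s π + 1 = k)).card := by
  rw [Finset.sum_add_distrib]
  congr 1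
  · have h1 : ∀ π ∈ (univ : Finset (Equiv.Perm (Fin n))),
        (if s π = k then s π + 1 else 0) = (if s π = k then k + 1 else 0) := by
      intro π _
      by_cases h : s π = k <;> simp [h]
    rw [Finset.sum_congr rfl h1, ← Finset.sum_filter, Finset.sum_const, smul_eq_mul, mul_comm]
  · have h1 : ∀ π ∈ (univ : Finset (Equiv.Perm (Fin n))),
        (if s π + 1 = k then n - s π else 0) = (if s π + 1 = k then n + 1 - k else 0) := by
      intro π _
      by_cases h : s π + 1 = k
      · rw [if_pos h, if_pos h]
        omega
      · rw [if_neg h, if_neg h]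
    rw [Finset.sum_congr rfl h1, ← Finset.sum_filter, Finset.sum_const, smul_eq_mul, mul_comm]

theorem main_count (n k : ℕ) :
    (univ.filter (fun π : Equiv.Perm (Fin n) => excF π = k)).card =
      (univ.filter (fun π : Equiv.Perm (Fin n) => desF π = k)).card := by
  induction n generalizing k with
  | zero =>
      have h : ∀ π : Equiv.Perm (Fin 0), excF π = desF π := by
        intro π
        have h1 : excF π = 0 := by rw [excF]; simp
        have h2 : desF π = 0 := by rw [desF]; simp
        rw [h1, h2]
      exact congrArg Finset.card (Finset.filter_congr fun π _ => by rw [h π])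
  | succ n ih =>
      have hE := step_count (n := n) insEEquiv excF excF
        (fun π k => by simp only [insEEquiv_apply]; exact fiber_insE π k) k
      have hD := step_count (n := n) insDEquiv desF desF
        (fun π k => by simp only [insDEquiv_apply]; exact fiber_insD π k) k
      rw [hE, hD, sum_fiber_eq, sum_fiber_eq]
      cases k with
      | zero =>
          have hE0 : (univ.filter (fun π : Equiv.Perm (Fin n) => excF π + 1 = 0)) = ∅ :=
            Finset.filter_false_of_mem (fun π _ => by omega)
          have hD0 : (univ.filter (fun π : Equiv.Perm (Fin n) => desF π + 1 = 0)) = ∅ :=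
            Finset.filter_false_of_mem (fun π _ => by omega)
          rw [hE0, hD0, ih 0]
      | succ k' =>
          have hE0 : (univ.filter (fun π : Equiv.Perm (Fin n) => excF π + 1 = k' + 1))
              = (univ.filter (fun π : Equiv.Perm (Fin n) => excF π = k')) :=
            Finset.filter_congr (fun π _ => by omega)
          have hD0 : (univ.filter (fun π : Equiv.Perm (Fin n) => desF π + 1 = k' + 1))
              = (univ.filter (fun π : Equiv.Perm (Fin n) => desF π = k')) :=
            Finset.filter_congr (fun π _ => by omega)
          rw [hE0, hD0, ih (k' + 1), ih k']


lemma excPerm_eq {n : ℕ} (π : Equiv.Perm (Fin n)) : excPerm π = excF π := by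
  rw [excPerm, Nat.card_eq_fintype_card, Fintype.card_subtype, excF]

lemma desPerm_eq {n : ℕ} (π : Equiv.Perm (Fin n)) : desPerm π = desF π := by
  rw [desPerm]
  show Nat.card {i : Fin n // desp π i} = desF π
  rw [Nat.card_eq_fintype_card, Fintype.card_subtype, desF]

end ExcDes

/-- The excedance number and the descent number are equidistributed on `S_n`. -/
theorem exc_des_equidistributed (n k : ℕ) :
    Nat.card {π : Equiv.Perm (Fin n) // excPerm π = k} =
      Nat.card {π : Equiv.Perm (Fin n) // desPerm π = k} := by
  rw [Nat.card_eq_fintype_card, Nat.card_eq_fintype_card, Fintype.card_subtype,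
    Fintype.card_subtype]
  rw [show (univ.filter fun π : Equiv.Perm (Fin n) => excPerm π = k)
      = univ.filter (fun π => ExcDes.excF π = k) from
    Finset.filter_congr fun π _ => by rw [ExcDes.excPerm_eq π]]
  rw [show (univ.filter fun π : Equiv.Perm (Fin n) => desPerm π = k)
      = univ.filter (fun π => ExcDes.desF π = k) from
    Finset.filter_congr fun π _ => by rw [ExcDes.desPerm_eq π]]
  exact ExcDes.main_count n k
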